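/- Let d ≥ 1, let R > 0, and let K : ℝ^d × ℝ^d → ℂ be bounded and measurable with K(x+n, y) = K(x, y−n) for all x, y ∈ ℝ^d and n ∈ ℤ^d, and with K(x,y) = 0 whenever |x−y| > R. Let f : ℝ^d → ℂ be continuous with compact support. Then for all x ∈ ℝ^d and l ∈ ℝ^d, Σ_{m∈ℤ^d} e^{i⟨m,l⟩} ∫_{ℝ^d} K(x−m, y) f(y) dy = ∫_{(0,1)^d} ( Σ_{m∈ℤ^d} e^{i⟨m,l⟩} K(x−m, y) ) ( Σ_{n∈ℤ^d} e^{i⟨n,l⟩} f(y−n) ) dy, where all sums have only finitely many nonzero terms. -/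

import Mathlib

open MeasureTheory

/-- The point of `ℝ^d` with integer coordinates `n ∈ ℤ^d`. -/
noncomputable def zv {d : ℕ} (n : Fin d → ℤ) : EuclideanSpace ℝ (Fin d) :=
  (WithLp.equiv 2 (Fin d → ℝ)).symm fun i => (n i : ℝ)

/-- The periodicity cell `(0,1)^d` as a subset of `ℝ^d`. -/
def cellE (d : ℕ) : Set (EuclideanSpace ℝ (Fin d)) :=
  {y | ∀ i, y i ∈ Set.Ioo (0:ℝ) 1}

namespace Stmt17Aux

open Submodule

variable {d : ℕ}

lemma zv_apply (n : Fin d → ℤ) (i : Fin d) : zv n i = (n i : ℝ) := rfl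

lemma zv_add (m n : Fin d → ℤ) : zv (m + n) = zv m + zv n := by
  ext i
  simp [zv_apply, zv]

lemma zv_neg (n : Fin d → ℤ) : zv (-n) = - zv n := by
  ext i
  simp [zv]

lemma abs_apply_le_norm (y : EuclideanSpace ℝ (Fin d)) (i : Fin d) : |y i| ≤ ‖y‖ := by
  rw [EuclideanSpace.norm_eq]
  rw [show |y i| = Real.sqrt (‖y i‖^2) by rw [Real.sqrt_sq_eq_abs]; simp]
  apply Real.sqrt_le_sqrt
  exact Finset.single_le_sum (f := fun j => ‖y j‖^2) (fun j _ => sq_nonneg _) (Finset.mem_univ i)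

lemma norm_le_of_mem_cell (hd : 1 ≤ d) {y : EuclideanSpace ℝ (Fin d)} (hy : y ∈ cellE d) :
    ‖y‖ ≤ d := by
  have h1 : ‖y‖ ≤ Real.sqrt d := by
    rw [EuclideanSpace.norm_eq]
    apply Real.sqrt_le_sqrt
    calc ∑ i, ‖y i‖^2 ≤ ∑ _i : Fin d, 1 := by
          apply Finset.sum_le_sum
          intro i _
          have := hy i
          have h0 : |y i| ≤ 1 := by
            rw [abs_le]; constructor <;> [linarith [this.1]; linarith [this.2]]
          calc ‖y i‖^2 = |y i|^2 := by simp [Real.norm_eq_abs]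
            _ ≤ 1^2 := by apply pow_le_pow_left₀ (abs_nonneg _) h0
            _ = 1 := one_pow 2
      _ = d := by simp
  refine h1.trans ?_
  have hd1 : (1:ℝ) ≤ d := by exact_mod_cast hd
  calc Real.sqrt d ≤ Real.sqrt ((d:ℝ)^2) := Real.sqrt_le_sqrt (by nlinarith)
    _ = d := Real.sqrt_sq (by positivity)

lemma finite_zv_le (C : ℝ) : {m : Fin d → ℤ | ‖zv m‖ ≤ C}.Finite := by
  apply Set.Finite.subset (Set.Finite.pi (fun i : Fin d => Set.finite_Icc (-⌈C⌉) ⌈C⌉))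
  intro m hm
  simp only [Set.mem_pi, Set.mem_univ, Set.mem_Icc, forall_true_left]
  intro i
  have h1 : |(m i : ℝ)| ≤ C := by
    have := abs_apply_le_norm (zv m) i
    rw [zv_apply] at this
    exact this.trans hm
  have h2 : (|m i| : ℝ) ≤ (⌈C⌉ : ℝ) := by
    push_cast at h1 ⊢
    exact h1.trans (Int.le_ceil C)
  rw [abs_le] at *
  exact_mod_cast h2

noncomputable def bE (d : ℕ) : Module.Basis (Fin d) ℝ (EuclideanSpace ℝ (Fin d)) :=
  (Pi.basisFun ℝ (Fin d)).map (WithLp.linearEquiv 2 ℝ (Fin d → ℝ)).symm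

lemma bE_repr (y : EuclideanSpace ℝ (Fin d)) (i : Fin d) : (bE d).repr y i = y i := by
  simp [bE]

noncomputable def psiE (d : ℕ) : (Fin d → ℤ) ≃ span ℤ (Set.range (bE d)) :=
  ((bE d).restrictScalars ℤ).equivFun.toEquiv.symm

lemma psiE_coe (n : Fin d → ℤ) :
    ((psiE d n : span ℤ (Set.range (bE d))) : EuclideanSpace ℝ (Fin d)) = zv n := by
  have h : (psiE d n : span ℤ (Set.range (bE d))) = ∑ i, n i • (bE d).restrictScalars ℤ i := by
    simp [psiE, Module.Basis.equivFun_symm_apply]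
  rw [h]
  push_cast
  apply (bE d).repr.injective
  ext j
  rw [map_sum]
  simp only [map_zsmul]
  rw [Finsupp.coe_finset_sum, Finset.sum_apply]
  simp only [Finsupp.coe_smul, Pi.smul_apply, Module.Basis.restrictScalars_apply]
  simp [Module.Basis.repr_self, Finsupp.single_apply, bE_repr, zv]

lemma measurable_apply_E (i : Fin d) : Measurable (fun y : EuclideanSpace ℝ (Fin d) => y i) :=
  (measurable_pi_apply i).comp (MeasurableEquiv.toLp 2 (Fin d → ℝ)).symm.measurable

lemma measurableSet_cellE : MeasurableSet (cellE d) := by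
  have : cellE d = ⋂ i, (fun y : EuclideanSpace ℝ (Fin d) => y i) ⁻¹' (Set.Ioo 0 1) := by
    ext y; simp [cellE]
  rw [this]
  exact MeasurableSet.iInter fun i => (measurable_apply_E i) measurableSet_Ioo

lemma hyperplane_null (i : Fin d) (c : ℝ) :
    volume {y : EuclideanSpace ℝ (Fin d) | y i = c} = 0 := by
  have hmp := EuclideanSpace.volume_preserving_symm_measurableEquiv_toLp (Fin d)
  have he : {y : EuclideanSpace ℝ (Fin d) | y i = c}
      = (MeasurableEquiv.toLp 2 (Fin d → ℝ)).symm ⁻¹' {z : Fin d → ℝ | z i = c} := rfl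
  have hms : MeasurableSet {z : Fin d → ℝ | z i = c} := by
    have : {z : Fin d → ℝ | z i = c} = (fun z : Fin d → ℝ => z i) ⁻¹' {c} := rfl
    rw [this]
    exact (measurable_pi_apply i) (measurableSet_singleton c)
  rw [he, hmp.measure_preimage hms.nullMeasurableSet]
  have := MeasureTheory.Measure.pi_hyperplane (μ := fun _ : Fin d => (volume : Measure ℝ)) i c
  simpa [MeasureTheory.volume_pi] using this

lemma FD_eq : ZSpan.fundamentalDomain (bE d)
    = {y : EuclideanSpace ℝ (Fin d) | ∀ i, y i ∈ Set.Ico (0:ℝ) 1} := by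
  ext y
  simp [ZSpan.fundamentalDomain, bE_repr]

lemma cell_ae_eq :
    (ZSpan.fundamentalDomain (bE d) : Set (EuclideanSpace ℝ (Fin d))) =ᵐ[volume] cellE d := by
  rw [MeasureTheory.ae_eq_set]
  constructor
  · refine measure_mono_null ?_ (measure_iUnion_null fun i => hyperplane_null (d := d) i 0)
    intro y hy
    rw [FD_eq] at hy
    obtain ⟨hy1, hy2⟩ := hy
    simp only [cellE, Set.mem_setOf_eq, not_forall] at hy2
    obtain ⟨i, hi⟩ := hy2
    have := hy1 i
    simp only [Set.mem_Ico] at this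
    simp only [Set.mem_Ioo] at hi
    refine Set.mem_iUnion.mpr ⟨i, ?_⟩
    simp only [Set.mem_setOf_eq]
    by_contra h
    exact hi ⟨lt_of_le_of_ne this.1 (Ne.symm h), this.2⟩
  · refine measure_mono_null ?_ (measure_empty (μ := volume))
    intro y hy
    obtain ⟨hy1, hy2⟩ := hy
    exfalso
    apply hy2
    rw [FD_eq]
    intro i
    have := hy1 i
    exact ⟨le_of_lt this.1, this.2⟩

lemma integral_eq_tsum_cell (g : EuclideanSpace ℝ (Fin d) → ℂ) (hg : Integrable g) :
    ∫ y, g y = ∑' n : Fin d → ℤ, ∫ y in cellE d, g (zv n + y) := by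
  haveI : Countable (span ℤ (Set.range (bE d))) := Countable.of_equiv _ (psiE d)
  haveI : MeasurableVAdd (span ℤ (Set.range (bE d))) (EuclideanSpace ℝ (Fin d)) :=
    { measurable_const_vadd := fun c => by
        have h : ((c +ᵥ ·) : EuclideanSpace ℝ (Fin d) → EuclideanSpace ℝ (Fin d))
            = fun y => (c : EuclideanSpace ℝ (Fin d)) + y := rfl
        rw [h]; exact measurable_id.const_add _,
      measurable_vadd_const := fun x => by
        have h : (fun c : span ℤ (Set.range (bE d)) => c +ᵥ x)
            = fun c : span ℤ (Set.range (bE d)) => (c : EuclideanSpace ℝ (Fin d)) + x := rfl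
        rw [h]; exact measurable_subtype_coe.add_const _ }
  haveI : VAddInvariantMeasure (span ℤ (Set.range (bE d))) (EuclideanSpace ℝ (Fin d)) volume :=
    ⟨fun c s hs => by
      have h : ((c +ᵥ ·) : EuclideanSpace ℝ (Fin d) → EuclideanSpace ℝ (Fin d)) ⁻¹' s
          = (((c : EuclideanSpace ℝ (Fin d)) + ·)) ⁻¹' s := rfl
      rw [h]; exact measure_preimage_add _ _ _⟩
  have hfd := ZSpan.isAddFundamentalDomain (bE d) (volume : Measure (EuclideanSpace ℝ (Fin d)))
  have h1 := hfd.integral_eq_tsum'' g hg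
  rw [h1, ← (psiE d).tsum_eq]
  apply tsum_congr; intro n
  rw [setIntegral_congr_set cell_ae_eq]
  apply setIntegral_congr_fun measurableSet_cellE
  intro y _
  rw [← psiE_coe n]
  rfl

/-- The exponential factor. -/
noncomputable def eF (d : ℕ) (l : EuclideanSpace ℝ (Fin d)) (m : Fin d → ℤ) : ℂ :=
  Complex.exp (Complex.I * ((∑ i, (m i : ℝ) * l i : ℝ) : ℂ))

lemma eF_def (l : EuclideanSpace ℝ (Fin d)) (m : Fin d → ℤ) :
    Complex.exp (Complex.I * ((∑ i, (m i : ℝ) * l i : ℝ) : ℂ)) = eF d l m := rfl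

lemma eF_add (l : EuclideanSpace ℝ (Fin d)) (m n : Fin d → ℤ) :
    eF d l (m + n) = eF d l m * eF d l n := by
  rw [eF, eF, eF, ← Complex.exp_add]
  congr 1
  have h : (∑ i, ((m + n) i : ℝ) * l i) = (∑ i, (m i : ℝ) * l i) + (∑ i, (n i : ℝ) * l i) := by
    rw [← Finset.sum_add_distrib]
    apply Finset.sum_congr rfl
    intro i _
    have : ((m + n) i : ℝ) = (m i : ℝ) + (n i : ℝ) := by
      simp [Pi.add_apply]
    rw [this]; ring
  rw [h]
  push_cast
  ring

lemma eF_ne (l : EuclideanSpace ℝ (Fin d)) (m : Fin d → ℤ) : eF d l m ≠ 0 :=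
  Complex.exp_ne_zero _

lemma eF_factor (l : EuclideanSpace ℝ (Fin d)) (m n : Fin d → ℤ) :
    eF d l m = eF d l (m + n) * eF d l (-n) := by
  rw [← eF_add]
  congr 1
  abel

lemma eF_norm (l : EuclideanSpace ℝ (Fin d)) (m : Fin d → ℤ) : ‖eF d l m‖ = 1 := by
  rw [eF, Complex.norm_exp]
  simp

end Stmt17Aux

open Stmt17Aux

/-- **Convolution formula for the Floquet–Bloch transform of a kernel operator.**
Let `K : ℝ^d × ℝ^d → ℂ` be bounded and measurable with `K(x+n,y) = K(x,y−n)` for all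
`n ∈ ℤ^d` and `K(x,y) = 0` whenever `|x−y| > R`, and let `f` be continuous with compact
support. Then for all `x, l ∈ ℝ^d`,
`Σ_m e^{i⟨m,l⟩} ∫ K(x−m,y) f(y) dy
  = ∫_{(0,1)^d} (Σ_m e^{i⟨m,l⟩} K(x−m,y)) (Σ_n e^{i⟨n,l⟩} f(y−n)) dy`,
where all sums have only finitely many nonzero terms. -/
theorem stmt17 (d : ℕ) (hd : 1 ≤ d) (R : ℝ) (hR : 0 < R)
    (K : EuclideanSpace ℝ (Fin d) → EuclideanSpace ℝ (Fin d) → ℂ)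
    (hKm : Measurable (Function.uncurry K)) (M : ℝ) (hKb : ∀ x y, ‖K x y‖ ≤ M)
    (hKper : ∀ (x y : EuclideanSpace ℝ (Fin d)) (n : Fin d → ℤ), K (x + zv n) y = K x (y - zv n))
    (hKsupp : ∀ x y : EuclideanSpace ℝ (Fin d), R < ‖x - y‖ → K x y = 0)
    (f : EuclideanSpace ℝ (Fin d) → ℂ) (hf : Continuous f) (hfc : HasCompactSupport f) :
    ∀ x l : EuclideanSpace ℝ (Fin d),
      {m : Fin d → ℤ |
        Complex.exp (Complex.I * ((∑ i, (m i : ℝ) * l i : ℝ) : ℂ)) * ∫ y, K (x - zv m) y * f y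
          ≠ 0}.Finite ∧
      (∀ y : EuclideanSpace ℝ (Fin d),
        {m : Fin d → ℤ |
          Complex.exp (Complex.I * ((∑ i, (m i : ℝ) * l i : ℝ) : ℂ)) * K (x - zv m) y ≠ 0}.Finite ∧
        {n : Fin d → ℤ |
          Complex.exp (Complex.I * ((∑ i, (n i : ℝ) * l i : ℝ) : ℂ)) * f (y - zv n) ≠ 0}.Finite) ∧
      (∑' m : Fin d → ℤ,
          Complex.exp (Complex.I * ((∑ i, (m i : ℝ) * l i : ℝ) : ℂ)) * ∫ y, K (x - zv m) y * f y)
        = ∫ y in cellE d,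
            (∑' m : Fin d → ℤ,
              Complex.exp (Complex.I * ((∑ i, (m i : ℝ) * l i : ℝ) : ℂ)) * K (x - zv m) y)
            * (∑' n : Fin d → ℤ,
              Complex.exp (Complex.I * ((∑ i, (n i : ℝ) * l i : ℝ) : ℂ)) * f (y - zv n)) := by
  classical
  intro x l
  simp only [eF_def]
  -- bound on the support of f
  obtain ⟨r0, hr0⟩ := hfc.isBounded.subset_closedBall 0
  set r : ℝ := max r0 0 with hrdef
  have hr0' : (0:ℝ) ≤ r := le_max_right _ _
  have hfr : ∀ y, f y ≠ 0 → ‖y‖ ≤ r := by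
    intro y hy
    have h1 : y ∈ tsupport f := subset_tsupport f hy
    have h2 := hr0 h1
    rw [Metric.mem_closedBall, dist_zero_right] at h2
    exact h2.trans (le_max_left _ _)
  obtain ⟨Cf, hCf⟩ := hf.bounded_above_of_compact_support hfc
  have hCf0 : 0 ≤ Cf := le_trans (norm_nonneg (f 0)) (hCf 0)
  have hM0 : 0 ≤ M := le_trans (norm_nonneg _) (hKb 0 0)
  have hd1 : (1:ℝ) ≤ d := by exact_mod_cast hd
  have hKy : ∀ a, Measurable (K a) := fun a => hKm.comp measurable_prodMk_left
  -- vanishing lemmas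
  have hKvan : ∀ (m : Fin d → ℤ) (y : EuclideanSpace ℝ (Fin d)),
      ‖x‖ + R + ‖y‖ < ‖zv m‖ → K (x - zv m) y = 0 := by
    intro m y hm
    apply hKsupp
    have h2 : ‖zv m‖ - ‖x - y‖ ≤ ‖x - y - zv m‖ := by
      have h := norm_sub_norm_le (zv m) (x - y)
      have h' : ‖zv m - (x - y)‖ = ‖x - y - zv m‖ := norm_sub_rev _ _
      linarith
    have h3 : ‖x - y‖ ≤ ‖x‖ + ‖y‖ := norm_sub_le x y
    have h4 : x - zv m - y = x - y - zv m := by abel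
    rw [h4]
    linarith
  have hfvan : ∀ (n : Fin d → ℤ) (y : EuclideanSpace ℝ (Fin d)),
      ‖y‖ + r < ‖zv n‖ → f (y - zv n) = 0 := by
    intro n y hn
    by_contra hne
    have h1 := hfr _ hne
    have h2 : ‖zv n‖ - ‖y‖ ≤ ‖y - zv n‖ := by
      have h := norm_sub_norm_le (zv n) y
      have h' : ‖zv n - y‖ = ‖y - zv n‖ := norm_sub_rev _ _
      linarith
    linarith
  refine ⟨?_, ?_, ?_⟩
  · -- finiteness of the support of the transformed operator
    apply Set.Finite.subset (finite_zv_le (‖x‖ + R + r))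
    intro m hm
    simp only [Set.mem_setOf_eq] at hm ⊢
    by_contra hc
    push_neg at hc
    apply hm
    have hz : (fun y => K (x - zv m) y * f y) = fun _ => (0:ℂ) := by
      funext y
      by_cases hy : f y = 0
      · rw [hy, mul_zero]
      · rw [hKvan m y (by have := hfr y hy; linarith), zero_mul]
    rw [hz, integral_zero, mul_zero]
  · -- pointwise finiteness
    intro y
    constructor
    · apply Set.Finite.subset (finite_zv_le (‖x‖ + R + ‖y‖))
      intro m hm
      simp only [Set.mem_setOf_eq] at hm ⊢
      by_contra hc
      push_neg at hc
      exact hm (by rw [hKvan m y hc, mul_zero])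
    · apply Set.Finite.subset (finite_zv_le (‖y‖ + r))
      intro n hn
      simp only [Set.mem_setOf_eq] at hn ⊢
      by_contra hc
      push_neg at hc
      exact hn (by rw [hfvan n y hc, mul_zero])
  -- the main identity
  set N : ℕ := ⌈‖x‖ + R + r + 2*(d:ℝ) + 2⌉₊ with hNdef
  have hNge : ‖x‖ + R + r + 2*(d:ℝ) + 2 ≤ N := Nat.le_ceil _
  set S : Finset (Fin d → ℤ) := Fintype.piFinset fun _ => Finset.Icc (-(N:ℤ)) (N:ℤ) with hSdef
  have hS : ∀ m : Fin d → ℤ, m ∉ S → (N:ℝ) < ‖zv m‖ := by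
    intro m hm
    rw [hSdef, Fintype.mem_piFinset] at hm
    push_neg at hm
    obtain ⟨i, hi⟩ := hm
    rw [Finset.mem_Icc] at hi
    push_neg at hi
    have habs : (N:ℤ) < |m i| := by
      rcases le_or_gt (-(N:ℤ)) (m i) with h | h
      · have h' := hi h
        calc (N:ℤ) < m i := h'
          _ ≤ |m i| := le_abs_self _
      · calc (N:ℤ) < -(m i) := by linarith
          _ ≤ |m i| := neg_le_abs _
    have h1 : ((N:ℝ)) < |(m i : ℝ)| := by
      have : ((N:ℤ):ℝ) < ((|m i| : ℤ):ℝ) := by exact_mod_cast habs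
      push_cast at this
      exact_mod_cast this
    calc (N:ℝ) < |(m i : ℝ)| := h1
      _ ≤ ‖zv m‖ := by
        have h := abs_apply_le_norm (zv m) i
        rwa [zv_apply] at h
  -- integrability facts
  have hcellsub : cellE d ⊆ Metric.closedBall (0 : EuclideanSpace ℝ (Fin d)) d := by
    intro y hy
    rw [Metric.mem_closedBall, dist_zero_right]
    exact norm_le_of_mem_cell hd hy
  have hvolcell : volume (cellE d) < ⊤ :=
    lt_of_le_of_lt (measure_mono hcellsub) measure_closedBall_lt_top
  haveI hfinM : IsFiniteMeasure (volume.restrict (cellE d)) :=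
    ⟨by rwa [Measure.restrict_apply_univ]⟩
  have hIntOn : ∀ (h : EuclideanSpace ℝ (Fin d) → ℂ) (B : ℝ), Measurable h →
      (∀ y, ‖h y‖ ≤ B) → IntegrableOn h (cellE d) := by
    intro h B hm hb
    exact Integrable.mono' (integrable_const B) hm.aestronglyMeasurable
      (Filter.Eventually.of_forall hb)
  have hIntg : ∀ m : Fin d → ℤ, Integrable (fun y => K (x - zv m) y * f y) := by
    intro m
    apply Integrable.mono'
      (g := fun y => (Metric.closedBall (0:EuclideanSpace ℝ (Fin d)) r).indicator
        (fun _ => M * Cf) y)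
    · rw [integrable_indicator_iff measurableSet_closedBall]
      exact integrableOn_const measure_closedBall_lt_top.ne
    · exact ((hKy _).mul hf.measurable).aestronglyMeasurable
    · apply Filter.Eventually.of_forall
      intro y
      by_cases hy : y ∈ Metric.closedBall (0:EuclideanSpace ℝ (Fin d)) r
      · rw [Set.indicator_of_mem hy]
        calc ‖K (x - zv m) y * f y‖ = ‖K (x - zv m) y‖ * ‖f y‖ := norm_mul _ _
          _ ≤ M * Cf := mul_le_mul (hKb _ _) (hCf y) (norm_nonneg _) hM0
      · rw [Set.indicator_of_notMem hy]
        have hfy : f y = 0 := by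
          by_contra hne
          exact hy (mem_closedBall_zero_iff.mpr (hfr y hne))
        rw [hfy, mul_zero, norm_zero]
  -- the reindexing involution
  have hinv : Function.Involutive
      (fun p : (Fin d → ℤ) × (Fin d → ℤ) => (p.1 + p.2, -p.2)) := by
    intro p
    simp
  set σ : Equiv.Perm ((Fin d → ℤ) × (Fin d → ℤ)) := hinv.toPerm _ with hσdef
  have hσapp : ∀ p : (Fin d → ℤ) × (Fin d → ℤ), σ p = (p.1 + p.2, -p.2) := fun p => rfl
  -- the doubly-indexed coefficient
  set F : (Fin d → ℤ) × (Fin d → ℤ) → ℂ :=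
    fun p => eF d l p.1 * eF d l p.2 * ∫ y in cellE d, K (x - zv p.1) y * f (y - zv p.2)
    with hFdef
  -- vanishing of F outside S ×ˢ S
  have hcellK : ∀ m : Fin d → ℤ, m ∉ S → ∀ y ∈ cellE d, K (x - zv m) y = 0 := by
    intro m hm y hy
    apply hKvan
    have h1 := hS m hm
    have h2 := norm_le_of_mem_cell hd hy
    linarith
  have hcellf : ∀ n : Fin d → ℤ, n ∉ S → ∀ y ∈ cellE d, f (y - zv n) = 0 := by
    intro n hn y hy
    apply hfvan
    have h1 := hS n hn
    have h2 := norm_le_of_mem_cell hd hy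
    have hx0 : (0:ℝ) ≤ ‖x‖ := norm_nonneg _
    linarith
  have hFvan1 : ∀ p : (Fin d → ℤ) × (Fin d → ℤ), p.1 ∉ S → F p = 0 := by
    intro p hp
    rw [hFdef]
    have hz : ∫ y in cellE d, K (x - zv p.1) y * f (y - zv p.2) = 0 := by
      rw [setIntegral_congr_fun measurableSet_cellE
        (g := fun _ => (0:ℂ)) (fun y hy => by rw [hcellK p.1 hp y hy, zero_mul])]
      exact integral_zero _ _
    simp only [hz, mul_zero]
  have hFvan2 : ∀ p : (Fin d → ℤ) × (Fin d → ℤ), p.2 ∉ S → F p = 0 := by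
    intro p hp
    rw [hFdef]
    have hz : ∫ y in cellE d, K (x - zv p.1) y * f (y - zv p.2) = 0 := by
      rw [setIntegral_congr_fun measurableSet_cellE
        (g := fun _ => (0:ℂ)) (fun y hy => by rw [hcellf p.2 hp y hy, mul_zero])]
      exact integral_zero _ _
    simp only [hz, mul_zero]
  have hFvanS : ∀ p ∉ S ×ˢ S, F p = 0 := by
    intro p hp
    rw [Finset.mem_product] at hp
    push_neg at hp
    by_cases h1 : p.1 ∈ S
    · exact hFvan2 p (hp h1)
    · exact hFvan1 p h1
  -- pointwise identification of the unfolded terms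
  have hG : ∀ m n : Fin d → ℤ,
      eF d l m * ∫ y in cellE d, K (x - zv m) (zv n + y) * f (zv n + y) = F (σ (m, n)) := by
    intro m n
    have hK' : ∀ y : EuclideanSpace ℝ (Fin d),
        K (x - zv m) (zv n + y) = K (x - zv (m + n)) y := by
      intro y
      have h := hKper (x - zv m - zv n) (zv n + y) n
      rw [sub_add_cancel] at h
      rw [h, add_sub_cancel_left, zv_add, ← sub_sub]
    have hf' : ∀ y : EuclideanSpace ℝ (Fin d), f (zv n + y) = f (y - zv (-n)) := by
      intro y
      rw [zv_neg, sub_neg_eq_add, add_comm]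
    simp only [hK', hf']
    rw [hσapp, hFdef]
    rw [eF_factor l m n]
  -- summability helpers
  have hsum_inner : ∀ m : Fin d → ℤ, ∀ n ∉ S.image (fun k : Fin d → ℤ => -k),
      F (σ (m, n)) = 0 := by
    intro m n hn
    apply hFvan2
    rw [hσapp]
    intro hcon
    apply hn
    rw [Finset.mem_image]
    exact ⟨-n, hcon, by simp⟩
  have hsum_prod : ∀ p ∉ (S ×ˢ S).image σ, F (σ p) = 0 := by
    intro p hp
    apply hFvanS
    intro hcon
    apply hp
    rw [Finset.mem_image]
    exact ⟨σ p, hcon, hinv p⟩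
  -- left-hand side computation
  have hLHS : (∑' m : Fin d → ℤ, eF d l m * ∫ y, K (x - zv m) y * f y)
      = ∑ p ∈ S ×ˢ S, F p := by
    have step1 : ∀ m : Fin d → ℤ,
        eF d l m * ∫ y, K (x - zv m) y * f y = ∑' n : Fin d → ℤ, F (σ (m, n)) := by
      intro m
      rw [integral_eq_tsum_cell _ (hIntg m), ← tsum_mul_left]
      exact tsum_congr fun n => hG m n
    calc (∑' m : Fin d → ℤ, eF d l m * ∫ y, K (x - zv m) y * f y)
        = ∑' (m : Fin d → ℤ) (n : Fin d → ℤ), F (σ (m, n)) := tsum_congr step1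
      _ = ∑' p : (Fin d → ℤ) × (Fin d → ℤ), F (σ p) :=
          (Summable.tsum_prod' (summable_of_ne_finset_zero hsum_prod)
            (fun m => summable_of_ne_finset_zero (hsum_inner m))).symm
      _ = ∑' p : (Fin d → ℤ) × (Fin d → ℤ), F p := σ.tsum_eq F
      _ = ∑ p ∈ S ×ˢ S, F p := tsum_eq_sum hFvanS
  rw [hLHS]
  -- right-hand side computation
  have hstep : ∀ y ∈ cellE d,
      (∑' m : Fin d → ℤ, eF d l m * K (x - zv m) y)
        * (∑' n : Fin d → ℤ, eF d l n * f (y - zv n))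
      = ∑ m ∈ S, ∑ n ∈ S, (eF d l m * K (x - zv m) y) * (eF d l n * f (y - zv n)) := by
    intro y hy
    rw [tsum_eq_sum (s := S) (fun m hm => by rw [hcellK m hm y hy, mul_zero]),
      tsum_eq_sum (s := S) (fun n hn => by rw [hcellf n hn y hy, mul_zero]),
      Finset.sum_mul_sum]
  rw [setIntegral_congr_fun measurableSet_cellE hstep]
  have hint_term : ∀ (m n : Fin d → ℤ), IntegrableOn
      (fun y => (eF d l m * K (x - zv m) y) * (eF d l n * f (y - zv n))) (cellE d) := by
    intro m n
    apply hIntOn _ (M * Cf)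
    · exact (measurable_const.mul (hKy _)).mul
        (measurable_const.mul (hf.measurable.comp (measurable_id.sub measurable_const)))
    · intro y
      rw [norm_mul, norm_mul, norm_mul, eF_norm, eF_norm, one_mul, one_mul]
      exact mul_le_mul (hKb _ _) (hCf _) (norm_nonneg _) hM0
  rw [integral_finset_sum S (fun m _ => integrable_finset_sum S (fun n _ => hint_term m n))]
  rw [Finset.sum_product]
  apply Finset.sum_congr rfl
  intro m _
  rw [integral_finset_sum S (fun n _ => hint_term m n)]
  apply Finset.sum_congr rfl
  intro n _
  rw [hFdef]
  simp only [mul_mul_mul_comm]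
  rw [MeasureTheory.integral_const_mul]
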